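/- Let S : ℝ → ℝ and σ, q : ℝ → ℝ be twice continuously differentiable. Then for every x ∈ ℝ: S'(q(x)) · d/dx[ σ · d/dx(σ q) ](x) = d²/dx²[ σ² · (S∘q) ](x) − d/dx[ (1/2)(σ²)' · (3 (S∘q) − 2 (S'∘q)·q) ](x) + (1/2)(σ²)''(x) · ( S(q(x)) − S'(q(x)) q(x) ) − S''(q(x)) · ( ( d/dx(σ q)(x) )² − ( σ'(x) q(x) )² ). -/

import Mathlib

/-- Renormalisation identity: for twice continuously differentiable `S, σ, q : ℝ → ℝ`
and every `x`,
`S'(q)·(σ(σq)')' = (σ²(S∘q))'' − ((1/2)(σ²)'(3S∘q − 2(S'∘q)q))'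
 + (1/2)(σ²)''(S(q) − S'(q)q) − S''(q)(((σq)')² − (σ'q)²)`. -/
theorem renormalisation_identity (S σ q : ℝ → ℝ)
    (hS : ContDiff ℝ 2 S) (hσ : ContDiff ℝ 2 σ) (hq : ContDiff ℝ 2 q) (x : ℝ) :
    deriv S (q x) * deriv (fun y => σ y * deriv (fun z => σ z * q z) y) x
      = deriv (deriv (fun y => σ y ^ 2 * S (q y))) x
        - deriv (fun y =>
            (1 / 2) * deriv (fun z => σ z ^ 2) y
              * (3 * S (q y) - 2 * deriv S (q y) * q y)) x
        + (1 / 2) * deriv (deriv (fun y => σ y ^ 2)) x * (S (q x) - deriv S (q x) * q x)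
        - deriv (deriv S) (q x)
            * ((deriv (fun z => σ z * q z) x) ^ 2 - (deriv σ x * q x) ^ 2) := by
  have key : ∀ f : ℝ → ℝ, ContDiff ℝ 2 f → Differentiable ℝ (deriv f) := by
    intro f hf
    have h2 : ContDiff ℝ ((1 : WithTop ℕ∞) + 1) f := by
      norm_num
      exact hf
    exact ((contDiff_succ_iff_deriv.mp h2).2.2).differentiable one_ne_zero
  have hσ1 : Differentiable ℝ σ := hσ.differentiable two_ne_zero
  have hq1 : Differentiable ℝ q := hq.differentiable two_ne_zero
  have hS1 : Differentiable ℝ S := hS.differentiable two_ne_zero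
  have hσd : Differentiable ℝ (deriv σ) :=
    key σ hσ
  have hqd : Differentiable ℝ (deriv q) :=
    key q hq
  have hSd : Differentiable ℝ (deriv S) :=
    key S hS
  have Hσ : ∀ y : ℝ, HasDerivAt σ (deriv σ y) y := fun y => (hσ1 y).hasDerivAt
  have Hq : ∀ y : ℝ, HasDerivAt q (deriv q y) y := fun y => (hq1 y).hasDerivAt
  have HS : ∀ y : ℝ, HasDerivAt S (deriv S y) y := fun y => (hS1 y).hasDerivAt
  have Hσd : ∀ y : ℝ, HasDerivAt (deriv σ) (deriv (deriv σ) y) y := fun y => (hσd y).hasDerivAt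
  have Hqd : ∀ y : ℝ, HasDerivAt (deriv q) (deriv (deriv q) y) y := fun y => (hqd y).hasDerivAt
  have HSd : ∀ y : ℝ, HasDerivAt (deriv S) (deriv (deriv S) y) y := fun y => (hSd y).hasDerivAt
  have HSq : ∀ y : ℝ, HasDerivAt (fun y => S (q y)) (deriv S (q y) * deriv q y) y :=
    fun y => (HS (q y)).comp y (Hq y)
  have HSdq : ∀ y : ℝ, HasDerivAt (fun y => deriv S (q y))
      (deriv (deriv S) (q y) * deriv q y) y := fun y => (HSd (q y)).comp y (Hq y)
  simp only [pow_two]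
  -- first derivative of σ·q
  have hA : deriv (fun z => σ z * q z) = fun y => deriv σ y * q y + σ y * deriv q y :=
    funext fun y => ((Hσ y).mul (Hq y)).deriv
  -- first derivative of σ²
  have hsq : deriv (fun z => σ z * σ z) = fun y => deriv σ y * σ y + σ y * deriv σ y :=
    funext fun y => ((Hσ y).mul (Hσ y)).deriv
  -- first derivative of σ²·S∘q
  have hB : deriv (fun y => σ y * σ y * S (q y))
      = fun y => (deriv σ y * σ y + σ y * deriv σ y) * S (q y)
          + σ y * σ y * (deriv S (q y) * deriv q y) :=
    funext fun y => (((Hσ y).mul (Hσ y)).mul (HSq y)).deriv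
  rw [hA, hsq, hB]
  -- second derivative terms
  have HL : HasDerivAt (fun y => σ y * (deriv σ y * q y + σ y * deriv q y))
      (deriv σ x * (deriv σ x * q x + σ x * deriv q x)
        + σ x * ((deriv (deriv σ) x * q x + deriv σ x * deriv q x)
          + (deriv σ x * deriv q x + σ x * deriv (deriv q) x))) x :=
    (Hσ x).mul (((Hσd x).mul (Hq x)).add ((Hσ x).mul (Hqd x)))
  have HB2 : HasDerivAt (fun y => (deriv σ y * σ y + σ y * deriv σ y) * S (q y)
      + σ y * σ y * (deriv S (q y) * deriv q y))
      (((deriv (deriv σ) x * σ x + deriv σ x * deriv σ x)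
          + (deriv σ x * deriv σ x + σ x * deriv (deriv σ) x)) * S (q x)
        + (deriv σ x * σ x + σ x * deriv σ x) * (deriv S (q x) * deriv q x)
        + ((deriv σ x * σ x + σ x * deriv σ x) * (deriv S (q x) * deriv q x)
          + σ x * σ x * ((deriv (deriv S) (q x) * deriv q x) * deriv q x
            + deriv S (q x) * deriv (deriv q) x))) x :=
    ((((Hσd x).mul (Hσ x)).add ((Hσ x).mul (Hσd x))).mul (HSq x)).add
      (((Hσ x).mul (Hσ x)).mul ((HSdq x).mul (Hqd x)))
  have HC : HasDerivAt (fun y => 1 / 2 * (deriv σ y * σ y + σ y * deriv σ y)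
      * (3 * S (q y) - 2 * deriv S (q y) * q y))
      ((1 / 2 * ((deriv (deriv σ) x * σ x + deriv σ x * deriv σ x)
          + (deriv σ x * deriv σ x + σ x * deriv (deriv σ) x)))
        * (3 * S (q x) - 2 * deriv S (q x) * q x)
        + 1 / 2 * (deriv σ x * σ x + σ x * deriv σ x)
          * (3 * (deriv S (q x) * deriv q x)
            - ((2 * (deriv (deriv S) (q x) * deriv q x)) * q x
              + 2 * deriv S (q x) * deriv q x))) x :=
    (((((Hσd x).mul (Hσ x)).add ((Hσ x).mul (Hσd x))).const_mul (1 / 2)).mul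
      (((HSq x).const_mul 3).sub (((HSdq x).const_mul 2).mul (Hq x))))
  have HD : HasDerivAt (fun y => deriv σ y * σ y + σ y * deriv σ y)
      ((deriv (deriv σ) x * σ x + deriv σ x * deriv σ x)
        + (deriv σ x * deriv σ x + σ x * deriv (deriv σ) x)) x :=
    ((Hσd x).mul (Hσ x)).add ((Hσ x).mul (Hσd x))
  rw [HL.deriv, HB2.deriv, HC.deriv, HD.deriv]
  ring
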